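/- Let G be a simple graph and e an edge of G. Then the signless Laplacian eigenvalues of G - e interlace those of G: q_1(G) ≥ q_1(G-e) ≥ q_2(G) ≥ q_2(G-e) ≥ ... ≥ q_n(G) ≥ q_n(G-e). -/

import Mathlib

open Finset
open scoped Classical

/-- The signless Laplacian matrix `Q(G) = D(G) + A(G)` of a simple graph. -/
noncomputable def sLap {V : Type*} [Fintype V] [DecidableEq V] (G : SimpleGraph V) :
    Matrix V V ℝ :=
  Matrix.diagonal (fun v => (G.degree v : ℝ)) + G.adjMatrix ℝ

/-- Number of eigenvalues (with multiplicity) of a Hermitian matrix lying in a set. -/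
noncomputable def eigCount {V : Type*} [Fintype V] [DecidableEq V]
    {M : Matrix V V ℝ} (hM : M.IsHermitian) (s : Set ℝ) : ℕ :=
  (Finset.univ.filter fun i => hM.eigenvalues i ∈ s).card

section Aux
open Matrix
variable {n : ℕ}

noncomputable abbrev EV {A : Matrix (Fin n) (Fin n) ℝ} (hA : A.IsHermitian) :=
  hA.eigenvectorBasis

lemma inner_eq_dot (x y : EuclideanSpace ℝ (Fin n)) :
    (inner ℝ x y : ℝ) = (x : Fin n → ℝ) ⬝ᵥ y := by
  simp [PiLp.inner_apply, dotProduct, RCLike.inner_apply, starRingEnd_apply, mul_comm]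

lemma repr_mulVec {A : Matrix (Fin n) (Fin n) ℝ} (hA : A.IsHermitian)
    (x : EuclideanSpace ℝ (Fin n)) (i : Fin n) :
    (EV hA).repr (WithLp.toLp 2 (A *ᵥ x)) i = hA.eigenvalues i * (EV hA).repr x i := by
  rw [OrthonormalBasis.repr_apply_apply, OrthonormalBasis.repr_apply_apply,
    inner_eq_dot, inner_eq_dot, dotProduct_mulVec]
  have ht : Aᵀ = A := by
    rw [← Matrix.conjTranspose_eq_transpose_of_trivial, hA.eq]
  have hs : ∀ y : Fin n → ℝ, y ᵥ* A = A *ᵥ y := by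
    intro y; rw [← Matrix.mulVec_transpose, ht]
  show (⇑((EV hA) i)) ᵥ* A ⬝ᵥ (x : Fin n → ℝ) = _
  rw [hs, hA.mulVec_eigenvectorBasis, smul_dotProduct]
  rfl

lemma dot_self_eq {A : Matrix (Fin n) (Fin n) ℝ} (hA : A.IsHermitian)
    (x : EuclideanSpace ℝ (Fin n)) :
    (x : Fin n → ℝ) ⬝ᵥ x = ∑ i, ((EV hA).repr x i)^2 := by
  rw [← inner_eq_dot, ← (EV hA).repr.inner_map_map x x, inner_eq_dot]
  simp [dotProduct, sq]

lemma dot_mulVec_eq {A : Matrix (Fin n) (Fin n) ℝ} (hA : A.IsHermitian)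
    (x : EuclideanSpace ℝ (Fin n)) :
    (x : Fin n → ℝ) ⬝ᵥ (A *ᵥ x) = ∑ i, hA.eigenvalues i * ((EV hA).repr x i)^2 := by
  have h1 : (x : Fin n → ℝ) ⬝ᵥ (A *ᵥ x)
      = (inner ℝ x (WithLp.toLp 2 (A *ᵥ (x : Fin n → ℝ))) : ℝ) := by
    rw [inner_eq_dot]
  rw [h1, ← (EV hA).repr.inner_map_map x (WithLp.toLp 2 (A *ᵥ (x : Fin n → ℝ))),
    inner_eq_dot]
  show ((EV hA).repr x : Fin n → ℝ) ⬝ᵥ ((EV hA).repr (WithLp.toLp 2 (A *ᵥ x)) : Fin n → ℝ) = _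
  simp only [dotProduct]
  refine Finset.sum_congr rfl fun i _ => ?_
  rw [repr_mulVec hA x i]; ring

lemma mem_span_repr_support {A : Matrix (Fin n) (Fin n) ℝ} (hA : A.IsHermitian)
    {s : Set (Fin n)} {x : EuclideanSpace ℝ (Fin n)}
    (hx : x ∈ Submodule.span ℝ (⇑(EV hA) '' s)) {i : Fin n} (hi : i ∉ s) :
    (EV hA).repr x i = 0 := by
  rw [← OrthonormalBasis.coe_toBasis (EV hA)] at hx
  rw [Module.Basis.mem_span_image] at hx
  rw [← OrthonormalBasis.coe_toBasis_repr_apply]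
  by_contra h
  exact hi (hx (Finsupp.mem_support_iff.2 h))

lemma rayleigh_le {A : Matrix (Fin n) (Fin n) ℝ} (hA : A.IsHermitian)
    {s : Set (Fin n)} {c : ℝ} (hc : ∀ i ∈ s, hA.eigenvalues i ≤ c)
    {x : EuclideanSpace ℝ (Fin n)} (hx : x ∈ Submodule.span ℝ (⇑(EV hA) '' s)) :
    (x : Fin n → ℝ) ⬝ᵥ (A *ᵥ x) ≤ c * ((x : Fin n → ℝ) ⬝ᵥ x) := by
  rw [dot_mulVec_eq hA, dot_self_eq hA, Finset.mul_sum]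
  refine Finset.sum_le_sum fun i _ => ?_
  by_cases h : i ∈ s
  · exact mul_le_mul_of_nonneg_right (hc i h) (sq_nonneg _)
  · rw [mem_span_repr_support hA hx h]; simp

lemma rayleigh_ge {A : Matrix (Fin n) (Fin n) ℝ} (hA : A.IsHermitian)
    {s : Set (Fin n)} {c : ℝ} (hc : ∀ i ∈ s, c ≤ hA.eigenvalues i)
    {x : EuclideanSpace ℝ (Fin n)} (hx : x ∈ Submodule.span ℝ (⇑(EV hA) '' s)) :
    c * ((x : Fin n → ℝ) ⬝ᵥ x) ≤ (x : Fin n → ℝ) ⬝ᵥ (A *ᵥ x) := by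
  rw [dot_mulVec_eq hA, dot_self_eq hA, Finset.mul_sum]
  refine Finset.sum_le_sum fun i _ => ?_
  by_cases h : i ∈ s
  · exact mul_le_mul_of_nonneg_right (hc i h) (sq_nonneg _)
  · rw [mem_span_repr_support hA hx h]; simp

lemma finrank_span_eigen {A : Matrix (Fin n) (Fin n) ℝ} (hA : A.IsHermitian)
    (t : Finset (Fin n)) :
    Module.finrank ℝ (Submodule.span ℝ (⇑(EV hA) '' (t : Set (Fin n)))) = t.card := by
  have hli : LinearIndependent ℝ (fun j : t => (EV hA) j) :=
    (EV hA).orthonormal.linearIndependent.comp _ Subtype.val_injective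
  have himg : Set.range (fun j : t => (EV hA) j) = ⇑(EV hA) '' (t : Set (Fin n)) := by
    ext y; simp
  rw [← himg, finrank_span_eq_card hli, Fintype.card_coe]

lemma exists_ne_zero_inf {E : Type*} [NormedAddCommGroup E] [InnerProductSpace ℝ E]
    [FiniteDimensional ℝ E] (S T : Submodule ℝ E)
    (h : Module.finrank ℝ E < Module.finrank ℝ S + Module.finrank ℝ T) :
    ∃ x ∈ S ⊓ T, x ≠ 0 := by
  have h1 := Submodule.finrank_sup_add_finrank_inf_eq S T
  have h2 : Module.finrank ℝ ↥(S ⊔ T) ≤ Module.finrank ℝ E := Submodule.finrank_le _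
  have h3 : 0 < Module.finrank ℝ ↥(S ⊓ T) := by omega
  rw [Module.finrank_pos_iff] at h3
  obtain ⟨⟨x, hx⟩, hx0⟩ := exists_ne (0 : ↥(S ⊓ T))
  exact ⟨x, hx, by simpa [Submodule.mk_eq_zero] using hx0⟩

lemma finrank_inf_ge {E : Type*} [NormedAddCommGroup E] [InnerProductSpace ℝ E]
    [FiniteDimensional ℝ E] (S T : Submodule ℝ E) :
    Module.finrank ℝ S + Module.finrank ℝ T - Module.finrank ℝ E
      ≤ Module.finrank ℝ ↥(S ⊓ T) := by
  have h1 := Submodule.finrank_sup_add_finrank_inf_eq S T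
  have h2 : Module.finrank ℝ ↥(S ⊔ T) ≤ Module.finrank ℝ E := Submodule.finrank_le _
  omega

lemma dot_vecMulVec (w x : Fin n → ℝ) :
    x ⬝ᵥ (Matrix.vecMulVec w w *ᵥ x) = (w ⬝ᵥ x) * (w ⬝ᵥ x) := by
  simp only [dotProduct, Matrix.vecMulVec_apply, Matrix.mulVec, dotProduct,
    Finset.mul_sum, Finset.sum_mul]
  rw [Finset.sum_comm]
  refine Finset.sum_congr rfl fun i _ => Finset.sum_congr rfl fun j _ => by ring

lemma finrank_wperp (w : EuclideanSpace ℝ (Fin n)) :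
    n - 1 ≤ Module.finrank ℝ ((ℝ ∙ w)ᗮ : Submodule ℝ (EuclideanSpace ℝ (Fin n))) := by
  have h1 := Submodule.finrank_add_finrank_orthogonal (K := (ℝ ∙ w))
  have h2 : Module.finrank ℝ (ℝ ∙ w : Submodule ℝ (EuclideanSpace ℝ (Fin n))) ≤ 1 := by
    by_cases hw : w = 0
    · rw [hw, Submodule.span_zero_singleton]
      simp [finrank_bot]
    · rw [finrank_span_singleton hw]
  rw [finrank_euclideanSpace, Fintype.card_fin] at h1
  omega

lemma interlace {n : ℕ} (A B : Matrix (Fin n) (Fin n) ℝ) (w : Fin n → ℝ)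
    (hA : A.IsHermitian) (hB : B.IsHermitian) (hBA : B = A + Matrix.vecMulVec w w)
    (a b : Fin n → ℝ) (ha : Antitone a) (hb : Antitone b)
    (σ τ : Equiv.Perm (Fin n)) (haσ : ∀ i, a i = hA.eigenvalues (σ i))
    (hbτ : ∀ i, b i = hB.eigenvalues (τ i)) :
    (∀ i, a i ≤ b i) ∧
    ∀ i : Fin n, ∀ h : (i : ℕ) + 1 < n, b ⟨(i : ℕ) + 1, h⟩ ≤ a i := by
  have hdotB : ∀ x : Fin n → ℝ, x ⬝ᵥ (B *ᵥ x) = x ⬝ᵥ (A *ᵥ x) + (w ⬝ᵥ x) * (w ⬝ᵥ x) := by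
    intro x
    rw [hBA, Matrix.add_mulVec, dotProduct_add, dot_vecMulVec]
  constructor
  · intro i
    set S := Submodule.span ℝ (⇑(EV hA) '' ((Finset.Iic i).image σ : Finset (Fin n)))
    set T := Submodule.span ℝ (⇑(EV hB) '' ((Finset.Ici i).image τ : Finset (Fin n)))
    have hS : Module.finrank ℝ S = (i : ℕ) + 1 := by
      rw [finrank_span_eigen, Finset.card_image_of_injective _ σ.injective, Fin.card_Iic]
    have hT : Module.finrank ℝ T = n - (i : ℕ) := by
      rw [finrank_span_eigen, Finset.card_image_of_injective _ τ.injective, Fin.card_Ici]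
    obtain ⟨x, hx, hx0⟩ := exists_ne_zero_inf S T (by
      rw [hS, hT, finrank_euclideanSpace, Fintype.card_fin]
      have := i.isLt; omega)
    obtain ⟨hxS, hxT⟩ := hx
    have hp : (0:ℝ) < (x : Fin n → ℝ) ⬝ᵥ x := by
      have hnn : (0:ℝ) ≤ (x : Fin n → ℝ) ⬝ᵥ x :=
        Finset.sum_nonneg fun i _ => mul_self_nonneg _
      rcases lt_or_eq_of_le hnn with h' | h'
      · exact h'
      · exact absurd (dotProduct_self_eq_zero.1 h'.symm) (by simpa using hx0)
    have h1 : a i * ((x : Fin n → ℝ) ⬝ᵥ x) ≤ (x : Fin n → ℝ) ⬝ᵥ (A *ᵥ x) := by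
      refine rayleigh_ge hA (fun k hk => ?_) hxS
      simp only [Finset.coe_image, Set.mem_image, Finset.mem_coe, Finset.mem_Iic] at hk
      obtain ⟨j, hj, rfl⟩ := hk
      rw [← haσ]; exact ha hj
    have h2 : (x : Fin n → ℝ) ⬝ᵥ (B *ᵥ x) ≤ b i * ((x : Fin n → ℝ) ⬝ᵥ x) := by
      refine rayleigh_le hB (fun k hk => ?_) hxT
      simp only [Finset.coe_image, Set.mem_image, Finset.mem_coe, Finset.mem_Ici] at hk
      obtain ⟨j, hj, rfl⟩ := hk
      rw [← hbτ]; exact hb hj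
    have h3 := hdotB x
    nlinarith [mul_self_nonneg (w ⬝ᵥ (x : Fin n → ℝ))]
  · intro i h
    set i1 : Fin n := ⟨(i : ℕ) + 1, h⟩
    set S1 := Submodule.span ℝ (⇑(EV hB) '' ((Finset.Iic i1).image τ : Finset (Fin n)))
    set S2 := ((ℝ ∙ (WithLp.toLp 2 w : EuclideanSpace ℝ (Fin n)))ᗮ : Submodule ℝ (EuclideanSpace ℝ (Fin n)))
    set S3 := Submodule.span ℝ (⇑(EV hA) '' ((Finset.Ici i).image σ : Finset (Fin n)))
    have hS1 : Module.finrank ℝ S1 = (i : ℕ) + 2 := by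
      rw [finrank_span_eigen, Finset.card_image_of_injective _ τ.injective, Fin.card_Iic]
    have hS2 : n - 1 ≤ Module.finrank ℝ S2 := finrank_wperp _
    have hS3 : Module.finrank ℝ S3 = n - (i : ℕ) := by
      rw [finrank_span_eigen, Finset.card_image_of_injective _ σ.injective, Fin.card_Ici]
    have h12 : (i : ℕ) + 1 ≤ Module.finrank ℝ ↥(S1 ⊓ S2) := by
      have := finrank_inf_ge S1 S2
      rw [finrank_euclideanSpace, Fintype.card_fin] at this
      omega
    obtain ⟨x, hx, hx0⟩ := exists_ne_zero_inf (S1 ⊓ S2) S3 (by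
      rw [hS3, finrank_euclideanSpace, Fintype.card_fin]
      omega)
    obtain ⟨⟨hxS1, hxS2⟩, hxS3⟩ := hx
    have hp : (0:ℝ) < (x : Fin n → ℝ) ⬝ᵥ x := by
      have hnn : (0:ℝ) ≤ (x : Fin n → ℝ) ⬝ᵥ x :=
        Finset.sum_nonneg fun i _ => mul_self_nonneg _
      rcases lt_or_eq_of_le hnn with h' | h'
      · exact h'
      · exact absurd (dotProduct_self_eq_zero.1 h'.symm) (by simpa using hx0)
    have hw0 : w ⬝ᵥ (x : Fin n → ℝ) = 0 := by
      have := (Submodule.mem_orthogonal _ x).1 hxS2 _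
        (Submodule.mem_span_singleton_self _)
      rw [inner_eq_dot] at this
      exact this
    have h1 : b i1 * ((x : Fin n → ℝ) ⬝ᵥ x) ≤ (x : Fin n → ℝ) ⬝ᵥ (B *ᵥ x) := by
      refine rayleigh_ge hB (fun k hk => ?_) hxS1
      simp only [Finset.coe_image, Set.mem_image, Finset.mem_coe, Finset.mem_Iic] at hk
      obtain ⟨j, hj, rfl⟩ := hk
      rw [← hbτ]; exact hb hj
    have h2 : (x : Fin n → ℝ) ⬝ᵥ (A *ᵥ x) ≤ a i * ((x : Fin n → ℝ) ⬝ᵥ x) := by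
      refine rayleigh_le hA (fun k hk => ?_) hxS3
      simp only [Finset.coe_image, Set.mem_image, Finset.mem_coe, Finset.mem_Ici] at hk
      obtain ⟨j, hj, rfl⟩ := hk
      rw [← haσ]; exact ha hj
    have h3 := hdotB x
    rw [hw0] at h3
    nlinarith


lemma sLap_split {n : ℕ} (G : SimpleGraph (Fin n)) {u v : Fin n} (huv : G.Adj u v) :
    sLap G = sLap (G.deleteEdges {s(u, v)}) +
      Matrix.vecMulVec (fun x => if x = u ∨ x = v then (1:ℝ) else 0)
        (fun x => if x = u ∨ x = v then (1:ℝ) else 0) := by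
  have hne : u ≠ v := G.ne_of_adj huv
  set G' := G.deleteEdges {s(u, v)} with hG'
  have hadj' : ∀ i j, G'.Adj i j ↔ G.Adj i j ∧ ¬((i = u ∧ j = v) ∨ (i = v ∧ j = u)) := by
    intro i j
    rw [hG', SimpleGraph.deleteEdges_adj]
    simp only [Set.mem_singleton_iff, Sym2.eq_iff]
  have hnbu : G'.neighborFinset u = (G.neighborFinset u).erase v := by
    ext x
    simp only [SimpleGraph.mem_neighborFinset, Finset.mem_erase, hadj' u x]
    tauto
  have hnbv : G'.neighborFinset v = (G.neighborFinset v).erase u := by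
    ext x
    simp only [SimpleGraph.mem_neighborFinset, Finset.mem_erase, hadj' v x]
    tauto
  have hnbo : ∀ i, i ≠ u → i ≠ v → G'.neighborFinset i = G.neighborFinset i := by
    intro i hiu hiv
    ext x
    simp only [SimpleGraph.mem_neighborFinset, hadj' i x]
    tauto
  have hdeg : ∀ i, (G.degree i : ℝ)
      = (G'.degree i : ℝ) + (if i = u ∨ i = v then (1:ℝ) else 0) := by
    intro i
    by_cases hiu : i = u
    · subst hiu
      have h1 : G'.degree i = G.degree i - 1 := by
        rw [SimpleGraph.degree, SimpleGraph.degree, hnbu,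
          Finset.card_erase_of_mem (by rwa [SimpleGraph.mem_neighborFinset])]
      have h2 : 1 ≤ G.degree i :=
        Finset.card_pos.2 ⟨v, by rwa [SimpleGraph.mem_neighborFinset]⟩
      have h3 : G.degree i = G'.degree i + 1 := by omega
      simp only [true_or, if_pos, h3]
      push_cast; ring
    · by_cases hiv : i = v
      · subst hiv
        have h1 : G'.degree i = G.degree i - 1 := by
          rw [SimpleGraph.degree, SimpleGraph.degree, hnbv,
            Finset.card_erase_of_mem (by rw [SimpleGraph.mem_neighborFinset]; exact huv.symm)]
        have h2 : 1 ≤ G.degree i :=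
          Finset.card_pos.2 ⟨u, by rw [SimpleGraph.mem_neighborFinset]; exact huv.symm⟩
        have h3 : G.degree i = G'.degree i + 1 := by omega
        simp only [or_true, if_pos, h3]
        push_cast; ring
      · simp only [hiu, hiv, or_self, if_false, add_zero]
        rw [SimpleGraph.degree, SimpleGraph.degree, hnbo i hiu hiv]
  ext i j
  simp only [sLap, Matrix.add_apply, Matrix.vecMulVec_apply, SimpleGraph.adjMatrix_apply]
  by_cases hij : i = j
  · subst hij
    simp only [Matrix.diagonal_apply_eq, SimpleGraph.irrefl, if_false]
    have : (if i = u ∨ i = v then (1:ℝ) else 0) * (if i = u ∨ i = v then (1:ℝ) else 0)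
        = (if i = u ∨ i = v then (1:ℝ) else 0) := by
      by_cases h : i = u ∨ i = v <;> simp [h]
    rw [this]
    have := hdeg i
    simp only [add_zero]; convert this using 3
    congr 1
    exact Subsingleton.elim _ _
  · simp only [Matrix.diagonal_apply_ne _ hij]
    have hGG' : (if G.Adj i j then (1:ℝ) else 0)
        = (if G'.Adj i j then (1:ℝ) else 0)
          + (if i = u ∨ i = v then (1:ℝ) else 0) * (if j = u ∨ j = v then (1:ℝ) else 0) := by
      by_cases hc : (i = u ∧ j = v) ∨ (i = v ∧ j = u)
      · have hGadj : G.Adj i j := by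
          rcases hc with ⟨rfl, rfl⟩ | ⟨rfl, rfl⟩
          · exact huv
          · exact huv.symm
        have hG'adj : ¬ G'.Adj i j := by
          rw [hadj' i j]; tauto
        have hw : (if i = u ∨ i = v then (1:ℝ) else 0) * (if j = u ∨ j = v then (1:ℝ) else 0) = 1 := by
          rcases hc with ⟨rfl, rfl⟩ | ⟨rfl, rfl⟩ <;> simp
        rw [if_pos hGadj, if_neg hG'adj, hw]; ring
      · have hG'adj : G'.Adj i j ↔ G.Adj i j := by
          rw [hadj' i j]; tauto
        have hw : (if i = u ∨ i = v then (1:ℝ) else 0) * (if j = u ∨ j = v then (1:ℝ) else 0) = 0 := by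
          by_cases hi : i = u ∨ i = v
          · by_cases hj : j = u ∨ j = v
            · exfalso
              rcases hi with rfl | rfl <;> rcases hj with rfl | rfl <;> tauto
            · simp [hj]
          · simp [hi]
        rw [hw, add_zero]
        by_cases hg : G.Adj i j <;> simp [hg, hG'adj]
    rw [hGG']; ring

end Aux

theorem stmt6 {n : ℕ} (G : SimpleGraph (Fin n)) {u v : Fin n} (huv : G.Adj u v)
    (hQ : (sLap G).IsHermitian)
    (hQ' : (sLap (G.deleteEdges {s(u, v)})).IsHermitian)
    (q q' : Fin n → ℝ) (hq : Antitone q) (hq' : Antitone q')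
    (σ τ : Equiv.Perm (Fin n))
    (hqσ : ∀ i, q i = hQ.eigenvalues (σ i))
    (hqτ : ∀ i, q' i = hQ'.eigenvalues (τ i)) :
    (∀ i, q' i ≤ q i) ∧
    ∀ i : Fin n, ∀ h : (i : ℕ) + 1 < n, q ⟨(i : ℕ) + 1, h⟩ ≤ q' i := by
  exact interlace (sLap (G.deleteEdges {s(u, v)})) (sLap G) _ hQ' hQ (sLap_split G huv)
    q' q hq' hq τ σ hqτ hqσ
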